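/- The first Eulerian element is idempotent in the Tits algebra: for a nonempty finite set I, in the ℚ-algebra spanned by set compositions of I with multiplication the linearized Tits product, the element e_I = Σ_{F ⊨ I} (-1)^{ℓ(F)-1} (1/ℓ(F)) · F satisfies e_I · e_I = e_I, where ℓ(F) denotes the number of blocks of F and the sum is over all compositions F of I. -/

import Mathlib

/-- `F` is a composition of the finite set `I`. -/
def IsComposition {α : Type*} [DecidableEq α] (I : Finset α) (F : List (Finset α)) : Prop :=
  (∀ B ∈ F, B ≠ ∅) ∧ F.Pairwise (fun A B => A ∩ B = ∅) ∧ F.foldr (· ∪ ·) ∅ = I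

/-- The Tits product of two set compositions. -/
def tits {α : Type*} [DecidableEq α] (F G : List (Finset α)) : List (Finset α) :=
  (F.map fun S => (G.map fun T => S ∩ T).filter fun T => decide (T ≠ ∅)).flatten

/-- The product of the Tits algebra of `I` over `ℚ`: the bilinear extension of the
Tits product of set compositions to formal `ℚ`-linear combinations. -/
noncomputable def titsMul {α : Type*} [DecidableEq α]
    (x y : List (Finset α) →₀ ℚ) : List (Finset α) →₀ ℚ :=
  x.sum fun F a => y.sum fun G b => Finsupp.single (tits F G) (a * b)

section EulerianAux

variable {α : Type*} [DecidableEq α]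

/-- restriction of a list of blocks to `S`. -/
def restr (S : Finset α) (G : List (Finset α)) : List (Finset α) :=
  (G.map fun T => S ∩ T).filter fun T => decide (T ≠ ∅)

lemma tits_eq_restr (F G : List (Finset α)) :
    tits F G = (F.map fun S => restr S G).flatten := rfl

@[simp] lemma restr_nil (S : Finset α) : restr S [] = [] := rfl

lemma restr_cons (S T : Finset α) (G : List (Finset α)) :
    restr S (T :: G) = if S ∩ T = ∅ then restr S G else (S ∩ T) :: restr S G := by
  by_cases h : S ∩ T = ∅ <;> simp [restr, List.filter_cons, h]

lemma restr_append (S : Finset α) (L1 L2 : List (Finset α)) :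
    restr S (L1 ++ L2) = restr S L1 ++ restr S L2 := by
  simp [restr]

lemma restr_eq_nil {S : Finset α} {G : List (Finset α)} (h : ∀ T ∈ G, S ∩ T = ∅) :
    restr S G = [] := by
  induction G with
  | nil => rfl
  | cons T G ih =>
      rw [restr_cons, if_pos (h T (by simp))]
      exact ih fun T hT => h T (by simp [hT])

lemma restr_congr {S S' : Finset α} {G : List (Finset α)} (h : ∀ T ∈ G, S ∩ T = S' ∩ T) :
    restr S G = restr S' G := by
  induction G with
  | nil => rfl
  | cons T G ih =>
      rw [restr_cons, restr_cons, h T (by simp), ih fun T hT => h T (by simp [hT])]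

lemma restr_restr {S A : Finset α} (h : S ⊆ A) (G : List (Finset α)) :
    restr S (restr A G) = restr S G := by
  induction G with
  | nil => rfl
  | cons T G ih =>
      rw [restr_cons S T G, restr_cons A T G]
      by_cases hAT : A ∩ T = ∅
      · rw [if_pos hAT, ih]
        have : S ∩ T = ∅ := by
          have := Finset.inter_subset_inter h (Finset.Subset.refl T)
          rw [hAT] at this
          exact Finset.subset_empty.mp this
        rw [if_pos this]
      · rw [if_neg hAT, restr_cons]
        have hST : S ∩ (A ∩ T) = S ∩ T := by
          rw [← Finset.inter_assoc, Finset.inter_eq_left.mpr h]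
        rw [hST, ih]

lemma restr_eq_self {A : Finset α} {G : List (Finset α)}
    (h : ∀ T ∈ G, T ≠ ∅ ∧ T ⊆ A) : restr A G = G := by
  induction G with
  | nil => rfl
  | cons T G ih =>
      have h1 := h T (by simp)
      rw [restr_cons, Finset.inter_eq_right.mpr h1.2, if_neg h1.1,
        ih fun T hT => h T (by simp [hT])]

/-! composition lemmas -/

lemma foldr_union_subset {G : List (Finset α)} {T : Finset α} (hT : T ∈ G) :
    T ⊆ G.foldr (· ∪ ·) ∅ := by
  induction G with
  | nil => simp at hT
  | cons S G ih =>
      rcases List.mem_cons.mp hT with h | h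
      · subst h; exact Finset.subset_union_left
      · exact (ih h).trans Finset.subset_union_right

lemma comp_block_subset {I : Finset α} {G : List (Finset α)} (h : IsComposition I G)
    {T : Finset α} (hT : T ∈ G) : T ⊆ I := by
  rw [← h.2.2]; exact foldr_union_subset hT

lemma comp_empty {G : List (Finset α)} (h : IsComposition ∅ G) : G = [] := by
  cases G with
  | nil => rfl
  | cons T G =>
      exact absurd (Finset.subset_empty.mp (comp_block_subset h (by simp)))
        (h.1 T (by simp))

lemma inter_foldr_eq_empty {T : Finset α} {G : List (Finset α)} (h : ∀ S ∈ G, T ∩ S = ∅) :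
    T ∩ G.foldr (· ∪ ·) ∅ = ∅ := by
  induction G with
  | nil => simp
  | cons S G ih =>
      simp only [List.foldr_cons, Finset.inter_union_distrib_left]
      rw [h S (by simp), ih fun S hS => h S (by simp [hS])]
      simp

lemma comp_cons_iff {I T : Finset α} {G : List (Finset α)} :
    IsComposition I (T :: G) ↔ T ≠ ∅ ∧ T ⊆ I ∧ IsComposition (I \ T) G := by
  constructor
  · intro h
    have hT : T ≠ ∅ := h.1 T (by simp)
    have hTI : T ⊆ I := comp_block_subset h (by simp)
    have hpw : ∀ S ∈ G, T ∩ S = ∅ := fun S hS => (List.pairwise_cons.mp h.2.1).1 S hS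
    refine ⟨hT, hTI, fun S hS => h.1 S (by simp [hS]), (List.pairwise_cons.mp h.2.1).2, ?_⟩
    have hfold : T ∪ G.foldr (· ∪ ·) ∅ = I := h.2.2
    have hdisj : Disjoint T (G.foldr (· ∪ ·) ∅) :=
      Finset.disjoint_iff_inter_eq_empty.mpr (inter_foldr_eq_empty hpw)
    rw [← hfold, Finset.union_sdiff_cancel_left hdisj]
  · rintro ⟨hT, hTI, h⟩
    refine ⟨?_, ?_, ?_⟩
    · intro S hS
      rcases List.mem_cons.mp hS with h' | h'
      · subst h'; exact hT
      · exact h.1 S h'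
    · rw [List.pairwise_cons]
      refine ⟨fun S hS => ?_, h.2.1⟩
      have hsub : S ⊆ I \ T := comp_block_subset h hS
      have hdisj : Disjoint T S := Finset.disjoint_sdiff.mono_right hsub
      exact Finset.disjoint_iff_inter_eq_empty.mp hdisj
    · show T ∪ G.foldr (· ∪ ·) ∅ = I
      rw [h.2.2, Finset.union_sdiff_of_subset hTI]

lemma foldr_restr (A : Finset α) (G : List (Finset α)) :
    (restr A G).foldr (· ∪ ·) ∅ = A ∩ G.foldr (· ∪ ·) ∅ := by
  induction G with
  | nil => simp
  | cons T G ih =>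
      rw [restr_cons]
      by_cases h : A ∩ T = ∅
      · rw [if_pos h, ih]
        simp only [List.foldr_cons, Finset.inter_union_distrib_left, h]
        simp
      · rw [if_neg h]
        simp only [List.foldr_cons, Finset.inter_union_distrib_left, ih]

lemma mem_restr {A T : Finset α} {G : List (Finset α)} (h : T ∈ restr A G) :
    ∃ S ∈ G, T = A ∩ S := by
  rw [restr] at h
  have h1 := List.mem_of_mem_filter h
  obtain ⟨S, hS, rfl⟩ := List.mem_map.mp h1
  exact ⟨S, hS, rfl⟩

lemma comp_restr {I A : Finset α} {G : List (Finset α)} (h : IsComposition I G)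
    (hA : A ⊆ I) : IsComposition A (restr A G) := by
  refine ⟨?_, ?_, ?_⟩
  · intro B hB
    have := List.of_mem_filter hB
    simpa using this
  · have hmap : (G.map fun T => A ∩ T).Pairwise (fun X Y => X ∩ Y = ∅) := by
      rw [List.pairwise_map]
      apply h.2.1.imp_of_mem
      intro S T _ _ hST
      have : A ∩ S ∩ (A ∩ T) ⊆ S ∩ T :=
        Finset.inter_subset_inter Finset.inter_subset_right
          Finset.inter_subset_right
      rw [hST] at this
      exact Finset.subset_empty.mp this
    exact hmap.filter _
  · rw [foldr_restr, h.2.2, Finset.inter_eq_left.mpr hA]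

lemma comp_nonempty {A : Finset α} {G : List (Finset α)} (h : IsComposition A G)
    (hA : A.Nonempty) : G ≠ [] := by
  intro hnil
  subst hnil
  have := h.2.2
  simp at this
  subst this
  simp at hA

/-- splitting uniqueness -/
lemma append_split {A B : Finset α} (hd : Disjoint A B) :
    ∀ (LA MA LB MB : List (Finset α)), IsComposition A LA → IsComposition A MA →
    IsComposition B LB → IsComposition B MB → LA ++ LB = MA ++ MB →
    LA = MA ∧ LB = MB := by
  intro LA
  induction LA generalizing A with
  | nil =>
      intro MA LB MB hLA hMA hLB hMB happ
      have hA : A = ∅ := by have := hLA.2.2; simpa using this.symm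
      subst hA
      rw [comp_empty hMA] at happ ⊢
      exact ⟨rfl, by simpa using happ⟩
  | cons a LA' ih =>
      intro MA LB MB hLA hMA hLB hMB happ
      cases MA with
      | nil =>
          have hA : A = ∅ := by have := hMA.2.2; simpa using this.symm
          subst hA
          have := comp_empty hLA
          simp at this
      | cons m MA' =>
          simp only [List.cons_append, List.cons.injEq] at happ
          obtain ⟨rfl, happ'⟩ := happ
          have h1 := comp_cons_iff.mp hLA
          have h2 := comp_cons_iff.mp hMA
          have := ih (hd.mono_left Finset.sdiff_subset) MA' LB MB h1.2.2 h2.2.2 hLB hMB happ'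
          exact ⟨by rw [this.1], this.2⟩

lemma sdiff_inter_eq {A T U : Finset α} (h : A ∩ U ∩ T = ∅) : (A \ T) ∩ U = A ∩ U := by
  ext a
  simp only [Finset.mem_inter, Finset.mem_sdiff]
  constructor
  · rintro ⟨⟨ha, _⟩, hu⟩; exact ⟨ha, hu⟩
  · rintro ⟨ha, hu⟩
    refine ⟨⟨ha, fun haT => ?_⟩, hu⟩
    have : a ∈ A ∩ U ∩ T := by simp [ha, hu, haT]
    rw [h] at this
    simp at this

lemma cons_char {A B T : Finset α} (hT : T ≠ ∅) (hTsub : T ⊆ A ∪ B)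
    {LA LB LA1 LB1 : List (Finset α)}
    (ca : (A ∩ T = ∅ ∧ LA1 = LA) ∨ (A ∩ T ≠ ∅ ∧ LA = (A ∩ T) :: LA1))
    (cb : (B ∩ T = ∅ ∧ LB1 = LB) ∨ (B ∩ T ≠ ∅ ∧ LB = (B ∩ T) :: LB1))
    (G' : List (Finset α)) :
    (IsComposition (A ∪ B) (T :: G') ∧ restr A (T :: G') = LA ∧ restr B (T :: G') = LB)
    ↔ (IsComposition ((A \ T) ∪ (B \ T)) G' ∧ restr (A \ T) G' = LA1 ∧
        restr (B \ T) G' = LB1) := by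
  have hdistrib : (A ∪ B) \ T = (A \ T) ∪ (B \ T) := Finset.union_sdiff_distrib _ _ _
  have hblocks : ∀ G' : List (Finset α), IsComposition ((A \ T) ∪ (B \ T)) G' →
      ∀ U ∈ G', U ∩ T = ∅ := by
    intro G' hcomp' U hU
    have hsub : U ⊆ (A \ T) ∪ (B \ T) := comp_block_subset hcomp' hU
    have : Disjoint U T := by
      refine Finset.disjoint_left.mpr fun a ha haT => ?_
      rcases Finset.mem_union.mp (hsub ha) with h | h
      · exact (Finset.mem_sdiff.mp h).2 haT
      · exact (Finset.mem_sdiff.mp h).2 haT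
    exact Finset.disjoint_iff_inter_eq_empty.mp this
  have hAc : ∀ G' : List (Finset α), (∀ U ∈ G', U ∩ T = ∅) →
      restr (A \ T) G' = restr A G' := by
    intro G' hb
    apply restr_congr
    intro U hU
    apply sdiff_inter_eq
    have : A ∩ U ∩ T ⊆ U ∩ T :=
      Finset.inter_subset_inter Finset.inter_subset_right (Finset.Subset.refl T)
    rw [hb U hU] at this
    exact Finset.subset_empty.mp this
  have hBc : ∀ G' : List (Finset α), (∀ U ∈ G', U ∩ T = ∅) →
      restr (B \ T) G' = restr B G' := by
    intro G' hb
    apply restr_congr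
    intro U hU
    apply sdiff_inter_eq
    have : B ∩ U ∩ T ⊆ U ∩ T :=
      Finset.inter_subset_inter Finset.inter_subset_right (Finset.Subset.refl T)
    rw [hb U hU] at this
    exact Finset.subset_empty.mp this
  constructor
  · rintro ⟨hcomp, hrA, hrB⟩
    obtain ⟨-, -, hcomp'⟩ := comp_cons_iff.mp hcomp
    rw [hdistrib] at hcomp'
    have hb := hblocks G' hcomp'
    refine ⟨hcomp', ?_, ?_⟩
    · rw [hAc G' hb]
      rw [restr_cons] at hrA
      rcases ca with ⟨h0, h1⟩ | ⟨h0, h1⟩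
      · rw [if_pos h0] at hrA; rw [hrA, h1]
      · rw [if_neg h0, h1] at hrA
        exact (List.cons.injEq _ _ _ _ ▸ hrA).2
    · rw [hBc G' hb]
      rw [restr_cons] at hrB
      rcases cb with ⟨h0, h1⟩ | ⟨h0, h1⟩
      · rw [if_pos h0] at hrB; rw [hrB, h1]
      · rw [if_neg h0, h1] at hrB
        exact (List.cons.injEq _ _ _ _ ▸ hrB).2
  · rintro ⟨hcomp', hrA, hrB⟩
    have hb := hblocks G' hcomp'
    have hcomp : IsComposition (A ∪ B) (T :: G') :=
      comp_cons_iff.mpr ⟨hT, hTsub, hdistrib ▸ hcomp'⟩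
    refine ⟨hcomp, ?_, ?_⟩
    · rw [restr_cons]
      rcases ca with ⟨h0, h1⟩ | ⟨h0, h1⟩
      · rw [if_pos h0, ← h1, ← hAc G' hb, hrA]
      · rw [if_neg h0, h1, ← hrA, hAc G' hb]
    · rw [restr_cons]
      rcases cb with ⟨h0, h1⟩ | ⟨h0, h1⟩
      · rw [if_pos h0, ← h1, ← hBc G' hb, hrB]
      · rw [if_neg h0, h1, ← hrB, hBc G' hb]


noncomputable def wq (m : ℕ) : ℚ := -(-1)^m / m

noncomputable def Pq (a n : ℕ) : ℚ := ∏ i ∈ Finset.range n, ((a : ℚ) + i)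

lemma Pq_pos {a : ℕ} (ha : 1 ≤ a) (n : ℕ) : 0 < Pq a n := by
  apply Finset.prod_pos
  intro i _
  have : (1:ℚ) ≤ (a:ℚ) := by exact_mod_cast ha
  positivity

lemma Pq_ne_zero {a : ℕ} (ha : 1 ≤ a) (n : ℕ) : Pq a n ≠ 0 := (Pq_pos ha n).ne'

lemma Pq_succ (a n : ℕ) : Pq a (n+1) = Pq a n * ((a:ℚ) + n) := Finset.prod_range_succ _ _

lemma Pq_succ' (a n : ℕ) : Pq a (n+1) = (a:ℚ) * Pq (a+1) n := by
  rw [Pq, Finset.prod_range_succ']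
  rw [Nat.cast_zero, add_zero, mul_comm]
  congr 1
  apply Finset.prod_congr rfl; intro i _; push_cast; ring

noncomputable def Tf (s p q : ℕ) : ℚ := -(-1)^(p+q+s) * Pq s q / Pq (s+p) (q+1)

lemma Tf_eq_w_base (s : ℕ) : Tf s 0 0 = wq s := by
  simp [Tf, wq, Pq_succ, Pq]

lemma Tf_p0 (s p : ℕ) : Tf s p 0 = wq (p + s) := by
  simp only [Tf, wq, Pq_succ, Pq]
  simp
  rw [add_comm p s]
  push_cast
  ring

lemma Tf_0q {s : ℕ} (hs : 1 ≤ s) (q : ℕ) : Tf s 0 q = wq (q + s) := by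
  rw [Tf, wq, Pq_succ, add_zero, mul_div_assoc, div_mul_eq_div_div,
    div_self (Pq_ne_zero hs q)]
  rw [Nat.zero_add, add_comm q s]
  push_cast
  ring

lemma Tf_rec (s p q : ℕ) :
    Tf s (p+1) (q+1) = Tf (s+1) p (q+1) + Tf (s+1) (p+1) q + Tf (s+1) p q := by
  have hd : Pq (s+p+1) (q+1) ≠ 0 := Pq_ne_zero (by omega) _
  have hK : ((s:ℚ)+p+q+2) ≠ 0 := by positivity
  have t1 : Tf s (p+1) (q+1)
      = -(-1:ℚ)^(p+q+s) * ((s:ℚ) * Pq (s+1) q) / (Pq (s+p+1) (q+1) * ((s:ℚ)+p+q+2)) := by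
    rw [Tf]
    have e1 : Pq s (q+1) = (s:ℚ) * Pq (s+1) q := Pq_succ' s q
    have e2 : s + (p+1) = s+p+1 := by omega
    rw [e1, e2, Pq_succ]
    have e4 : p+1+(q+1)+s = (p+q+s)+2 := by omega
    rw [e4, pow_add]
    push_cast
    ring
  have t2 : Tf (s+1) p (q+1)
      = -(-1:ℚ)^(p+q+s) * (Pq (s+1) q * ((s:ℚ)+q+1)) / (Pq (s+p+1) (q+1) * ((s:ℚ)+p+q+2)) := by
    rw [Tf]
    have e2 : s+1+p = s+p+1 := by omega
    rw [Pq_succ, e2, Pq_succ]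
    have e4 : p+(q+1)+(s+1) = (p+q+s)+2 := by omega
    rw [e4, pow_add]
    push_cast
    ring
  have t3 : Tf (s+1) (p+1) q
      = -(-1:ℚ)^(p+q+s) * (Pq (s+1) q * ((s:ℚ)+p+1)) / (Pq (s+p+1) (q+1) * ((s:ℚ)+p+q+2)) := by
    rw [Tf]
    have e2 : s+1+(p+1) = s+p+2 := by omega
    rw [e2]
    have hsp1 : ((s:ℚ)+p+1) ≠ 0 := by positivity
    have hrel : Pq (s+p+2) (q+1) * ((s:ℚ)+p+1) = Pq (s+p+1) (q+1) * ((s:ℚ)+p+q+2) := by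
      have u1 : Pq (s+p+1) (q+1+1) = ((s+p+1:ℕ):ℚ) * Pq (s+p+2) (q+1) := Pq_succ' _ _
      have u2 : Pq (s+p+1) (q+1+1) = Pq (s+p+1) (q+1) * ((((s+p+1:ℕ)):ℚ) + (((q+1:ℕ)):ℚ)) :=
        Pq_succ _ _
      rw [u1] at u2
      push_cast at u2 ⊢
      linear_combination u2
    have e5 : Pq (s+1) q / Pq (s+p+2) (q+1)
        = Pq (s+1) q * ((s:ℚ)+p+1) / (Pq (s+p+2) (q+1) * ((s:ℚ)+p+1)) :=
      (mul_div_mul_right _ _ hsp1).symm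
    rw [mul_div_assoc, e5, hrel, ← mul_div_assoc]
    have e4 : p+1+q+(s+1) = (p+q+s)+2 := by omega
    rw [e4, pow_add]
    push_cast
    ring
  have t4 : Tf (s+1) p q = (-1:ℚ)^(p+q+s) * Pq (s+1) q / Pq (s+p+1) (q+1) := by
    rw [Tf]
    have e2 : s+1+p = s+p+1 := by omega
    rw [e2]
    have e4 : p+q+(s+1) = (p+q+s)+1 := by omega
    rw [e4, pow_add]
    push_cast
    ring
  rw [t1, t2, t3, t4]
  field_simp
  ring

lemma Tf_zero {p q : ℕ} (hq : 1 ≤ q) : Tf 0 p q = 0 := by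
  have : Pq 0 q = 0 := by
    apply Finset.prod_eq_zero (Finset.mem_range.mpr hq)
    simp
  rw [Tf, this]
  simp

lemma wq_eq {m : ℕ} (hm : 1 ≤ m) : (-1:ℚ)^(m-1)/m = wq m := by
  obtain ⟨k, rfl⟩ := Nat.exists_eq_add_of_le hm
  rw [wq]
  congr 1
  rw [add_comm 1 k, pow_succ]
  simp

lemma eq_cons_of_head? {T : Finset α} {G : List (Finset α)} (h : G.head? = some T) :
    G = T :: G.tail := by
  cases G with
  | nil => simp at h
  | cons a t => simp at h; rw [h]; rfl

lemma fiber_sum (D : Finset (List (Finset α))) (T : Finset α) (s : ℕ) :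
    ∑ G ∈ D.filter (fun G => G.head? = some T), wq (G.length + s)
    = ∑ G' ∈ (D.filter (fun G => G.head? = some T)).image List.tail,
        wq (G'.length + (s+1)) := by
  rw [Finset.sum_image]
  · apply Finset.sum_congr rfl
    intro G hG
    have hh : G.head? = some T := (Finset.mem_filter.mp hG).2
    have hlen : G.length = G.tail.length + 1 := by
      rw [eq_cons_of_head? hh]
      simp
    congr 1
    omega
  · intro G1 h1 G2 h2 htail
    rw [eq_cons_of_head? (Finset.mem_filter.mp h1).2,
      eq_cons_of_head? (Finset.mem_filter.mp h2).2, htail]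


lemma W_lemma : ∀ (n : ℕ) (A B : Finset α) (LA LB : List (Finset α)) (s : ℕ)
    (D : Finset (List (Finset α))),
    LA.length + LB.length = n → Disjoint A B → IsComposition A LA → IsComposition B LB →
    (0 < s ∨ LA ≠ []) →
    (∀ G, G ∈ D ↔ IsComposition (A ∪ B) G ∧ restr A G = LA ∧ restr B G = LB) →
    ∑ G ∈ D, wq (G.length + s) = Tf s LA.length LB.length := by
  intro n
  induction n using Nat.strong_induction_on with
  | _ n IH =>
    intro A B LA LB s D hn hd hLA hLB hs hD
    match LA, LB with
    | [], [] =>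
      have hA : A = ∅ := by have := hLA.2.2; simpa using this.symm
      have hB : B = ∅ := by have := hLB.2.2; simpa using this.symm
      subst hA; subst hB
      have hDeq : D = {[]} := by
        apply Finset.ext
        intro G
        rw [hD G, Finset.mem_singleton]
        constructor
        · rintro ⟨hc, -, -⟩
          exact comp_empty (by simpa using hc)
        · rintro rfl
          exact ⟨⟨by simp, by simp, by simp⟩, rfl, rfl⟩
      rw [hDeq, Finset.sum_singleton]
      simpa using (Tf_eq_w_base s).symm
    | x :: LA', [] =>
      have hB : B = ∅ := by have := hLB.2.2; simpa using this.symm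
      subst hB
      have hDeq : D = {x :: LA'} := by
        apply Finset.ext
        intro G
        rw [hD G, Finset.mem_singleton]
        constructor
        · rintro ⟨hc, hrA, -⟩
          rw [← hrA]
          apply (restr_eq_self ?_).symm
          intro T hT
          exact ⟨hc.1 T hT, by simpa using comp_block_subset hc hT⟩
        · rintro rfl
          have hc : IsComposition (A ∪ ∅) (x :: LA') := by simpa using hLA
          refine ⟨hc, ?_, ?_⟩
          · apply restr_eq_self
            intro T hT
            exact ⟨hLA.1 T hT, comp_block_subset hLA hT⟩
          · apply restr_eq_nil
            intro T hT
            simp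
      rw [hDeq, Finset.sum_singleton]
      simp only [List.length_nil]
      rw [Tf_p0]
    | [], y :: LB' =>
      have hA : A = ∅ := by have := hLA.2.2; simpa using this.symm
      subst hA
      have hs1 : 1 ≤ s := by
        rcases hs with h | h
        · exact h
        · simp at h
      have hDeq : D = {y :: LB'} := by
        apply Finset.ext
        intro G
        rw [hD G, Finset.mem_singleton]
        constructor
        · rintro ⟨hc, -, hrB⟩
          rw [← hrB]
          apply (restr_eq_self ?_).symm
          intro T hT
          exact ⟨hc.1 T hT, by simpa using comp_block_subset hc hT⟩
        · rintro rfl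
          have hc : IsComposition (∅ ∪ B) (y :: LB') := by simpa using hLB
          refine ⟨hc, ?_, ?_⟩
          · apply restr_eq_nil
            intro T hT
            simp
          · apply restr_eq_self
            intro T hT
            exact ⟨hLB.1 T hT, comp_block_subset hLB hT⟩
      rw [hDeq, Finset.sum_singleton]
      simp only [List.length_nil]
      rw [Tf_0q hs1]
    | x :: LA', y :: LB' =>
      obtain ⟨hx, hxA, hLA'⟩ := comp_cons_iff.mp hLA
      obtain ⟨hy, hyB, hLB'⟩ := comp_cons_iff.mp hLB
      have hAx : A ∩ x = x := Finset.inter_eq_right.mpr hxA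
      have hBy : B ∩ y = y := Finset.inter_eq_right.mpr hyB
      have hBx : B ∩ x = ∅ :=
        Finset.disjoint_iff_inter_eq_empty.mp (hd.symm.mono_right hxA)
      have hAy : A ∩ y = ∅ :=
        Finset.disjoint_iff_inter_eq_empty.mp (hd.mono_right hyB)
      have hAxy : A ∩ (x ∪ y) = x := by
        rw [Finset.inter_union_distrib_left, hAx, hAy, Finset.union_empty]
      have hBxy : B ∩ (x ∪ y) = y := by
        rw [Finset.inter_union_distrib_left, hBx, hBy, Finset.empty_union]
      have hxy : x ≠ y := by
        intro h
        obtain ⟨a, ha⟩ := Finset.nonempty_iff_ne_empty.mpr hx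
        exact Finset.disjoint_left.mp hd (hxA ha) (hyB (h ▸ ha))
      have hxu : x ≠ x ∪ y := by
        intro h
        obtain ⟨a, ha⟩ := Finset.nonempty_iff_ne_empty.mpr hy
        have : a ∈ x := h ▸ (Finset.mem_union_right x ha)
        exact Finset.disjoint_left.mp hd (hxA this) (hyB ha)
      have hyu : y ≠ x ∪ y := by
        intro h
        obtain ⟨a, ha⟩ := Finset.nonempty_iff_ne_empty.mpr hx
        have : a ∈ y := h ▸ (Finset.mem_union_left y ha)
        exact Finset.disjoint_left.mp hd (hxA ha) (hyB this)
      have hxAB : x ⊆ A ∪ B := hxA.trans Finset.subset_union_left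
      have hyAB : y ⊆ A ∪ B := hyB.trans Finset.subset_union_right
      have hxyne : x ∪ y ≠ ∅ := by
        intro h
        apply hx
        have := Finset.union_eq_empty.mp h
        exact this.1
      have hcover : ∀ G ∈ D, G.head? = some x ∨ G.head? = some y ∨
          G.head? = some (x ∪ y) := by
        intro G hG
        obtain ⟨hc, hrA, hrB⟩ := (hD G).mp hG
        cases G with
        | nil => simp [restr_nil] at hrA
        | cons T G' =>
          obtain ⟨hTne, hTsub, -⟩ := comp_cons_iff.mp hc
          have hTeq : (A ∩ T) ∪ (B ∩ T) = T := by
            rw [← Finset.union_inter_distrib_right, Finset.inter_eq_right.mpr hTsub]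
          have hTA : A ∩ T = ∅ ∨ A ∩ T = x := by
            rw [restr_cons] at hrA
            by_cases h : A ∩ T = ∅
            · exact Or.inl h
            · rw [if_neg h] at hrA
              exact Or.inr (List.head_eq_of_cons_eq hrA)
          have hTB : B ∩ T = ∅ ∨ B ∩ T = y := by
            rw [restr_cons] at hrB
            by_cases h : B ∩ T = ∅
            · exact Or.inl h
            · rw [if_neg h] at hrB
              exact Or.inr (List.head_eq_of_cons_eq hrB)
          simp only [List.head?_cons, Option.some.injEq]
          rcases hTA with h1 | h1 <;> rcases hTB with h2 | h2
          · exact absurd (by rw [← hTeq, h1, h2, Finset.union_empty]) hTne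
          · refine Or.inr (Or.inl ?_)
            rw [← hTeq, h1, h2, Finset.empty_union]
          · refine Or.inl ?_
            rw [← hTeq, h1, h2, Finset.union_empty]
          · refine Or.inr (Or.inr ?_)
            rw [← hTeq, h1, h2]
      -- split the sum by head
      have hd12 : Disjoint (D.filter (fun G => G.head? = some x))
          (D.filter (fun G => G.head? = some y)) := by
        rw [Finset.disjoint_left]
        intro G h1 h2
        have e1 := (Finset.mem_filter.mp h1).2
        have e2 := (Finset.mem_filter.mp h2).2
        rw [e1] at e2
        exact hxy (Option.some.injEq _ _ ▸ e2)
      have hd13 : Disjoint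
          (D.filter (fun G => G.head? = some x) ∪ D.filter (fun G => G.head? = some y))
          (D.filter (fun G => G.head? = some (x ∪ y))) := by
        rw [Finset.disjoint_left]
        intro G h1 h2
        have e3 := (Finset.mem_filter.mp h2).2
        rcases Finset.mem_union.mp h1 with h | h
        · have e1 := (Finset.mem_filter.mp h).2
          rw [e1] at e3
          exact hxu (Option.some.injEq _ _ ▸ e3)
        · have e1 := (Finset.mem_filter.mp h).2
          rw [e1] at e3
          exact hyu (Option.some.injEq _ _ ▸ e3)
      have hDeq : D = (D.filter (fun G => G.head? = some x)
          ∪ D.filter (fun G => G.head? = some y))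
          ∪ D.filter (fun G => G.head? = some (x ∪ y)) := by
        apply Finset.ext
        intro G
        simp only [Finset.mem_union, Finset.mem_filter]
        constructor
        · intro hG
          rcases hcover G hG with h | h | h
          · exact Or.inl (Or.inl ⟨hG, h⟩)
          · exact Or.inl (Or.inr ⟨hG, h⟩)
          · exact Or.inr ⟨hG, h⟩
        · rintro ((⟨h, -⟩ | ⟨h, -⟩) | ⟨h, -⟩) <;> exact h
      have hsum : ∑ G ∈ D, wq (G.length + s)
          = ∑ G ∈ D.filter (fun G => G.head? = some x), wq (G.length + s)
          + ∑ G ∈ D.filter (fun G => G.head? = some y), wq (G.length + s)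
          + ∑ G ∈ D.filter (fun G => G.head? = some (x ∪ y)), wq (G.length + s) := by
        conv_lhs => rw [hDeq]
        rw [Finset.sum_union hd13, Finset.sum_union hd12]
      rw [hsum]
      -- the three fiber sums
      have hlen : (x :: LA').length + (y :: LB').length = n := hn
      simp only [List.length_cons] at hlen
      -- T = x
      have hfib1 : ∑ G ∈ D.filter (fun G => G.head? = some x), wq (G.length + s)
          = Tf (s+1) LA'.length (y :: LB').length := by
        rw [fiber_sum]
        apply IH (LA'.length + (y :: LB').length) (by simp at hlen ⊢; omega)
          (A \ x) B LA' (y :: LB') (s+1) _ rfl (hd.mono_left Finset.sdiff_subset)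
          hLA' hLB (Or.inl (Nat.succ_pos s))
        intro G'
        rw [Finset.mem_image]
        have hBxself : B \ x = B :=
          Finset.sdiff_eq_self_of_disjoint (hd.symm.mono_right hxA)
        constructor
        · rintro ⟨G, hG, rfl⟩
          have hG1 := Finset.mem_filter.mp hG
          have hGD := (hD G).mp hG1.1
          rw [eq_cons_of_head? hG1.2] at hGD
          have := (cons_char hx hxAB
            (Or.inr ⟨by rw [hAx]; exact hx, by rw [hAx]⟩)
            (Or.inl ⟨hBx, rfl⟩) G.tail).mp hGD
          rwa [hBxself] at this
        · intro hG'
          refine ⟨x :: G', ?_, rfl⟩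
          rw [Finset.mem_filter]
          constructor
          · apply (hD _).mpr
            apply (cons_char hx hxAB
              (Or.inr ⟨by rw [hAx]; exact hx, by rw [hAx]⟩)
              (Or.inl ⟨hBx, rfl⟩) G').mpr
            rwa [hBxself]
          · rfl
      -- T = y
      have hfib2 : ∑ G ∈ D.filter (fun G => G.head? = some y), wq (G.length + s)
          = Tf (s+1) (x :: LA').length LB'.length := by
        rw [fiber_sum]
        apply IH ((x :: LA').length + LB'.length) (by simp only [List.length_cons]; omega)
          A (B \ y) (x :: LA') LB' (s+1) _ rfl (hd.mono_right Finset.sdiff_subset)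
          hLA hLB' (Or.inl (Nat.succ_pos s))
        intro G'
        rw [Finset.mem_image]
        have hAyself : A \ y = A :=
          Finset.sdiff_eq_self_of_disjoint (hd.mono_right hyB)
        constructor
        · rintro ⟨G, hG, rfl⟩
          have hG1 := Finset.mem_filter.mp hG
          have hGD := (hD G).mp hG1.1
          rw [eq_cons_of_head? hG1.2] at hGD
          have := (cons_char hy hyAB
            (Or.inl ⟨hAy, rfl⟩)
            (Or.inr ⟨by rw [hBy]; exact hy, by rw [hBy]⟩) G.tail).mp hGD
          rwa [hAyself] at this
        · intro hG'
          refine ⟨y :: G', ?_, rfl⟩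
          rw [Finset.mem_filter]
          constructor
          · apply (hD _).mpr
            apply (cons_char hy hyAB
              (Or.inl ⟨hAy, rfl⟩)
              (Or.inr ⟨by rw [hBy]; exact hy, by rw [hBy]⟩) G').mpr
            rwa [hAyself]
          · rfl
      -- T = x ∪ y
      have hfib3 : ∑ G ∈ D.filter (fun G => G.head? = some (x ∪ y)), wq (G.length + s)
          = Tf (s+1) LA'.length LB'.length := by
        rw [fiber_sum]
        have hAu : A \ (x ∪ y) = A \ x := by
          ext a
          simp only [Finset.mem_sdiff, Finset.mem_union]
          constructor
          · rintro ⟨ha, h⟩; exact ⟨ha, fun hx' => h (Or.inl hx')⟩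
          · rintro ⟨ha, h⟩
            refine ⟨ha, ?_⟩
            rintro (h' | h')
            · exact h h'
            · exact Finset.disjoint_left.mp hd ha (hyB h')
        have hBu : B \ (x ∪ y) = B \ y := by
          ext a
          simp only [Finset.mem_sdiff, Finset.mem_union]
          constructor
          · rintro ⟨ha, h⟩; exact ⟨ha, fun hy' => h (Or.inr hy')⟩
          · rintro ⟨ha, h⟩
            refine ⟨ha, ?_⟩
            rintro (h' | h')
            · exact Finset.disjoint_left.mp hd.symm ha (hxA h')
            · exact h h'
        apply IH (LA'.length + LB'.length) (by omega)
          (A \ x) (B \ y) LA' LB' (s+1) _ rfl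
          ((hd.mono_left Finset.sdiff_subset).mono_right Finset.sdiff_subset)
          hLA' hLB' (Or.inl (Nat.succ_pos s))
        intro G'
        rw [Finset.mem_image]
        constructor
        · rintro ⟨G, hG, rfl⟩
          have hG1 := Finset.mem_filter.mp hG
          have hGD := (hD G).mp hG1.1
          rw [eq_cons_of_head? hG1.2] at hGD
          have := (cons_char hxyne (Finset.union_subset hxAB hyAB)
            (Or.inr ⟨by rw [hAxy]; exact hx, by rw [hAxy]⟩)
            (Or.inr ⟨by rw [hBxy]; exact hy, by rw [hBxy]⟩) G.tail).mp hGD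
          rwa [hAu, hBu] at this
        · intro hG'
          refine ⟨(x ∪ y) :: G', ?_, rfl⟩
          rw [Finset.mem_filter]
          constructor
          · apply (hD _).mpr
            apply (cons_char hxyne (Finset.union_subset hxAB hyAB)
              (Or.inr ⟨by rw [hAxy]; exact hx, by rw [hAxy]⟩)
              (Or.inr ⟨by rw [hBxy]; exact hy, by rw [hBxy]⟩) G').mpr
            rwa [hAu, hBu]
          · rfl
      rw [hfib1, hfib2, hfib3]
      simp only [List.length_cons]
      exact (Tf_rec s LA'.length LB'.length).symm


lemma tits_pair (A B : Finset α) (G : List (Finset α)) :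
    tits [A, B] G = restr A G ++ restr B G := by
  rw [tits_eq_restr]
  simp

lemma Z2 (A B : Finset α) (hA : A.Nonempty) (hB : B.Nonempty) (hd : Disjoint A B)
    (H : List (Finset α)) (D : Finset (List (Finset α)))
    (hD : ∀ G, G ∈ D ↔ IsComposition (A ∪ B) G ∧ tits [A, B] G = H) :
    ∑ G ∈ D, (-1:ℚ)^(G.length - 1)/(G.length : ℚ) = 0 := by
  rcases D.eq_empty_or_nonempty with rfl | ⟨G₀, hG₀⟩
  · simp
  obtain ⟨hc0, ht0⟩ := (hD G₀).mp hG₀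
  have hLA : IsComposition A (restr A G₀) := comp_restr hc0 Finset.subset_union_left
  have hLB : IsComposition B (restr B G₀) := comp_restr hc0 Finset.subset_union_right
  have hLAne : restr A G₀ ≠ [] := comp_nonempty hLA hA
  have hLBne : restr B G₀ ≠ [] := comp_nonempty hLB hB
  have hDchar : ∀ G, G ∈ D ↔ IsComposition (A ∪ B) G ∧ restr A G = restr A G₀ ∧
      restr B G = restr B G₀ := by
    intro G
    rw [hD G]
    constructor
    · rintro ⟨hc, ht⟩
      rw [← ht0, tits_pair, tits_pair] at ht
      have := append_split hd (restr A G) (restr A G₀) (restr B G) (restr B G₀)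
        (comp_restr hc Finset.subset_union_left) hLA
        (comp_restr hc Finset.subset_union_right) hLB ht
      exact ⟨hc, this⟩
    · rintro ⟨hc, h1, h2⟩
      rw [tits_pair, h1, h2, ← tits_pair, ht0]
      exact ⟨hc, rfl⟩
  have hsum : ∑ G ∈ D, (-1:ℚ)^(G.length - 1)/(G.length : ℚ)
      = ∑ G ∈ D, wq (G.length + 0) := by
    apply Finset.sum_congr rfl
    intro G hG
    have hc := ((hDchar G).mp hG).1
    have hGne : G ≠ [] := comp_nonempty hc (hA.mono Finset.subset_union_left)
    have : 1 ≤ G.length := List.length_pos_iff.mpr hGne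
    rw [add_zero]
    exact wq_eq this
  rw [hsum, W_lemma ((restr A G₀).length + (restr B G₀).length) A B _ _ 0 D rfl hd
    hLA hLB (Or.inr hLAne) hDchar]
  exact Tf_zero (List.length_pos_iff.mpr hLBne)

lemma tits_factor {I S : Finset α} {rest : List (Finset α)}
    (hF : IsComposition I (S :: rest)) {G : List (Finset α)} (hG : IsComposition I G) :
    tits (S :: rest) G = tits (S :: rest) (tits [S, I \ S] G) := by
  rw [tits_pair, tits_eq_restr, tits_eq_restr]
  congr 1
  apply List.map_congr_left
  intro S' hS'
  rw [restr_append]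
  rcases List.mem_cons.mp hS' with rfl | hS'r
  · rw [restr_restr (Finset.Subset.refl S')]
    have h2 : ∀ U ∈ restr (I \ S') G, S' ∩ U = ∅ := by
      intro U hU
      obtain ⟨T, -, rfl⟩ := mem_restr hU
      rw [← Finset.inter_assoc]
      have : S' ∩ (I \ S') = ∅ :=
        Finset.disjoint_iff_inter_eq_empty.mp Finset.disjoint_sdiff
      rw [this, Finset.empty_inter]
    rw [restr_eq_nil h2, List.append_nil]
  · have hSS' : S ∩ S' = ∅ := (List.pairwise_cons.mp hF.2.1).1 S' hS'r
    have hS'I : S' ⊆ I := comp_block_subset hF (by simp [hS'r])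
    have hS'B : S' ⊆ I \ S := by
      rw [Finset.subset_sdiff]
      refine ⟨hS'I, ?_⟩
      exact (Finset.disjoint_iff_inter_eq_empty.mpr hSS').symm
    have h1 : ∀ U ∈ restr S G, S' ∩ U = ∅ := by
      intro U hU
      obtain ⟨T, -, rfl⟩ := mem_restr hU
      rw [← Finset.inter_assoc, Finset.inter_comm S' S, hSS', Finset.empty_inter]
    rw [restr_eq_nil h1, List.nil_append, restr_restr hS'B]

/-! Finsupp algebra -/

lemma titsMul_single_single (F G : List (Finset α)) (a b : ℚ) :
    titsMul (Finsupp.single F a) (Finsupp.single G b)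
      = Finsupp.single (tits F G) (a * b) := by
  rw [titsMul, Finsupp.sum_single_index, Finsupp.sum_single_index]
  · simp
  · rw [Finsupp.sum_single_index] <;> simp

lemma titsMul_sum_left {ι : Type*} (s : Finset ι) (f : ι → (List (Finset α) →₀ ℚ))
    (y : List (Finset α) →₀ ℚ) :
    titsMul (∑ i ∈ s, f i) y = ∑ i ∈ s, titsMul (f i) y := by
  classical
  induction s using Finset.induction_on with
  | empty => simp [titsMul, Finsupp.sum_zero_index]
  | insert _ _ hnot ih =>
      rw [Finset.sum_insert hnot, Finset.sum_insert hnot, ← ih]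
      rw [titsMul, titsMul, titsMul, Finsupp.sum_add_index]
      · intro F _
        have : (y.sum fun G b => Finsupp.single (tits F G) ((0:ℚ) * b))
            = y.sum fun G b => (0 : List (Finset α) →₀ ℚ) := by
          apply Finsupp.sum_congr
          intro G _
          rw [zero_mul, Finsupp.single_zero]
        rw [this]; exact Finset.sum_const_zero
      · intro F _ a1 a2
        rw [← Finsupp.sum_add]
        apply Finsupp.sum_congr
        intro G _
        rw [add_mul, Finsupp.single_add]

lemma titsMul_sum_right {ι : Type*} (s : Finset ι) (f : ι → (List (Finset α) →₀ ℚ))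
    (x : List (Finset α) →₀ ℚ) :
    titsMul x (∑ i ∈ s, f i) = ∑ i ∈ s, titsMul x (f i) := by
  classical
  induction s using Finset.induction_on with
  | empty => simp [titsMul, Finsupp.sum_zero_index]
  | insert _ _ hnot ih =>
      rw [Finset.sum_insert hnot, Finset.sum_insert hnot, ← ih]
      rw [titsMul, titsMul, titsMul, ← Finsupp.sum_add]
      apply Finsupp.sum_congr
      intro F _
      rw [Finsupp.sum_add_index]
      · intro G _; rw [mul_zero, Finsupp.single_zero]
      · intro G _ b1 b2; rw [mul_add, Finsupp.single_add]

end EulerianAux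

/-- The first Eulerian element
`e_I = Σ_{F ⊨ I} (-1)^{ℓ(F)-1} (1/ℓ(F)) · F`
is idempotent in the Tits algebra of a nonempty finite set `I`
(here `C` is the set of all compositions of `I`). -/
theorem eulerian_idempotent {α : Type*} [DecidableEq α] (I : Finset α)
    (hI : I.Nonempty) (C : Finset (List (Finset α)))
    (hC : ∀ F, F ∈ C ↔ IsComposition I F) :
    titsMul (∑ F ∈ C, Finsupp.single F ((-1 : ℚ) ^ (F.length - 1) / (F.length : ℚ)))
        (∑ F ∈ C, Finsupp.single F ((-1 : ℚ) ^ (F.length - 1) / (F.length : ℚ))) =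
      ∑ F ∈ C, Finsupp.single F ((-1 : ℚ) ^ (F.length - 1) / (F.length : ℚ)) := by
  have hIC : [I] ∈ C := by
    rw [hC]
    refine ⟨?_, ?_, ?_⟩
    · intro B hB
      simp only [List.mem_singleton] at hB
      subst hB
      exact Finset.nonempty_iff_ne_empty.mp hI
    · simp
    · simp
  rw [titsMul_sum_left]
  have step1 : ∀ F ∈ C,
      titsMul (Finsupp.single F ((-1 : ℚ) ^ (F.length - 1) / (F.length : ℚ)))
        (∑ G ∈ C, Finsupp.single G ((-1 : ℚ) ^ (G.length - 1) / (G.length : ℚ)))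
      = ∑ G ∈ C, Finsupp.single (tits F G)
          (((-1 : ℚ) ^ (F.length - 1) / (F.length : ℚ)) *
            ((-1 : ℚ) ^ (G.length - 1) / (G.length : ℚ))) := by
    intro F _
    rw [titsMul_sum_right]
    apply Finset.sum_congr rfl
    intro G _
    exact titsMul_single_single F G _ _
  rw [Finset.sum_congr rfl step1]
  have hzero : ∀ F ∈ C, F ≠ [I] →
      (∑ G ∈ C, Finsupp.single (tits F G)
          (((-1 : ℚ) ^ (F.length - 1) / (F.length : ℚ)) *
            ((-1 : ℚ) ^ (G.length - 1) / (G.length : ℚ)))) = 0 := by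
    intro F hFC hFne
    have hF : IsComposition I F := (hC F).mp hFC
    match F, hF with
    | [], hF => 
      exfalso
      have := hF.2.2
      simp at this
      rw [← this] at hI
      simp at hI
    | [S], hF =>
      exfalso
      have := hF.2.2
      simp at this
      apply hFne
      rw [this]
    | S :: S₂ :: rest, hF =>
      obtain ⟨hS, hSI, hrest⟩ := comp_cons_iff.mp hF
      obtain ⟨hS₂, hS₂sub, -⟩ := comp_cons_iff.mp hrest
      have hA : S.Nonempty := Finset.nonempty_iff_ne_empty.mpr hS
      have hB : (I \ S).Nonempty :=
        (Finset.nonempty_iff_ne_empty.mpr hS₂).mono hS₂sub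
      have hAB : S ∪ (I \ S) = I := Finset.union_sdiff_of_subset hSI
      have hdisj : Disjoint S (I \ S) := Finset.disjoint_sdiff
      have hstep : ∀ G ∈ C, Finsupp.single (tits (S :: S₂ :: rest) G)
            (((-1 : ℚ) ^ ((S :: S₂ :: rest).length - 1) / ((S :: S₂ :: rest).length : ℚ)) *
              ((-1 : ℚ) ^ (G.length - 1) / (G.length : ℚ)))
          = Finsupp.single (tits (S :: S₂ :: rest) (tits [S, I \ S] G))
            (((-1 : ℚ) ^ ((S :: S₂ :: rest).length - 1) / ((S :: S₂ :: rest).length : ℚ)) *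
              ((-1 : ℚ) ^ (G.length - 1) / (G.length : ℚ))) := by
        intro G hGC
        rw [← tits_factor hF ((hC G).mp hGC)]
      rw [Finset.sum_congr rfl hstep]
      rw [← Finset.sum_fiberwise_of_maps_to
        (g := fun G => tits [S, I \ S] G) (t := C.image fun G => tits [S, I \ S] G)
        (fun G hG => Finset.mem_image_of_mem _ hG)]
      apply Finset.sum_eq_zero
      intro H hH
      have hfix : ∀ G ∈ C.filter (fun G => tits [S, I \ S] G = H),
          Finsupp.single (tits (S :: S₂ :: rest) (tits [S, I \ S] G))
            (((-1 : ℚ) ^ ((S :: S₂ :: rest).length - 1) / ((S :: S₂ :: rest).length : ℚ)) *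
              ((-1 : ℚ) ^ (G.length - 1) / (G.length : ℚ)))
          = Finsupp.single (tits (S :: S₂ :: rest) H)
            (((-1 : ℚ) ^ ((S :: S₂ :: rest).length - 1) / ((S :: S₂ :: rest).length : ℚ)) *
              ((-1 : ℚ) ^ (G.length - 1) / (G.length : ℚ))) := by
        intro G hG
        rw [(Finset.mem_filter.mp hG).2]
      rw [Finset.sum_congr rfl hfix]
      have hmap := map_sum (Finsupp.singleAddHom (tits (S :: S₂ :: rest) H))
        (fun G : List (Finset α) =>
          (((-1 : ℚ) ^ ((S :: S₂ :: rest).length - 1) / ((S :: S₂ :: rest).length : ℚ)) *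
            ((-1 : ℚ) ^ (G.length - 1) / (G.length : ℚ))))
        (C.filter (fun G => tits [S, I \ S] G = H))
      simp only [Finsupp.singleAddHom_apply] at hmap
      rw [← hmap, ← Finset.mul_sum]
      have hz : ∑ G ∈ C.filter (fun G => tits [S, I \ S] G = H),
          ((-1 : ℚ) ^ (G.length - 1) / (G.length : ℚ)) = 0 := by
        apply Z2 S (I \ S) hA hB hdisj H
        intro G
        rw [Finset.mem_filter, hC, hAB]
      rw [hz, mul_zero]
      simp
  rw [Finset.sum_eq_single_of_mem [I] hIC hzero]
  have hone : ((-1 : ℚ) ^ (([I] : List (Finset α)).length - 1) /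
      ((([I] : List (Finset α)).length : ℚ))) = 1 := by norm_num
  rw [hone]
  apply Finset.sum_congr rfl
  intro G hGC
  have hG := (hC G).mp hGC
  have htits : tits [I] G = G := by
    rw [tits_eq_restr]
    simp only [List.map_cons, List.map_nil, List.flatten_cons, List.flatten_nil,
      List.append_nil]
    apply restr_eq_self
    intro T hT
    exact ⟨hG.1 T hT, comp_block_subset hG hT⟩
  rw [htits, one_mul]
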